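/- The number of pairs (P, Q) of standard Young tableaux of the same shape λ ⊢ ℓ, where λ has at most two rows, equals the Catalan number C_ℓ. -/

import Mathlib

/-- Entries strictly increase down each column of a tableau, given as a list of rows. -/
def ColsStrict (t : List (List ℕ)) : Prop :=
  ∀ i j : ℕ, i + 1 < t.length → j < (t.getD (i + 1) []).length →
    (t.getD i []).getD j 0 < (t.getD (i + 1) []).getD j 0

/-- `t` is a standard Young tableau with entries `{1,…,ℓ}`: rows strictly increase,
columns strictly increase, row lengths weakly decrease, no empty rows, and the entries
are exactly `1,…,ℓ`, each occurring once. -/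
def IsSYT (ℓ : ℕ) (t : List (List ℕ)) : Prop :=
  (∀ r ∈ t, List.Chain' (· < ·) r) ∧ ColsStrict t ∧
    List.Chain' (fun a b => b ≤ a) (t.map List.length) ∧ (∀ r ∈ t, r ≠ []) ∧
    t.flatten.Perm (List.range' 1 ℓ)

/-- `t` is a semistandard Young tableau: rows weakly increase, columns strictly
increase, row lengths weakly decrease, and no empty rows. -/
def IsSSYT (t : List (List ℕ)) : Prop :=
  (∀ r ∈ t, List.Chain' (· ≤ ·) r) ∧ ColsStrict t ∧
    List.Chain' (fun a b => b ≤ a) (t.map List.length) ∧ (∀ r ∈ t, r ≠ [])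

/-- The shape of a tableau: the list of its row lengths. -/
def shape (t : List (List ℕ)) : List ℕ := t.map List.length

/-- The complementary partition of `ν` inside the `k × n` rectangle:
`ν^c = (n − ν_k, n − ν_{k−1}, …, n − ν_1)`, where `ν` is padded with zeros to length `k`. -/
def complementary (n k : ℕ) (ν : List ℕ) : List ℕ :=
  ((ν ++ List.replicate (k - ν.length) 0).map (fun x => n - x)).reverse

/-- The conjugate (transpose) partition of `ν`: the `j`-th part is the number of parts of
`ν` exceeding `j`. -/
def conjugate (ν : List ℕ) : List ℕ :=
  (List.range (ν.foldr max 0)).map (fun j => ν.countP (fun x => j < x))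

open List

namespace StmtAux

/-- Distribute `n, n+1, …` into two rows according to the word `w`
(`true` ↦ second row). -/
def build : ℕ → List Bool → List ℕ × List ℕ
  | _, [] => ([], [])
  | n, b :: w =>
    let p := build (n + 1) w
    if b then (p.1, n :: p.2) else (n :: p.1, p.2)

/-- Ballot condition. -/
def Bal (w : List Bool) : Prop :=
  ∀ i, (w.take i).count true ≤ (w.take i).count false


lemma build_true (n : ℕ) (w : List Bool) :
    build n (true :: w) = ((build (n + 1) w).1, n :: (build (n + 1) w).2) := by
  simp [build]

lemma build_false (n : ℕ) (w : List Bool) :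
    build n (false :: w) = (n :: (build (n + 1) w).1, (build (n + 1) w).2) := by
  simp [build]

lemma build_mem_le {n m : ℕ} {w : List Bool}
    (h : m ∈ (build n w).1 ∨ m ∈ (build n w).2) : n ≤ m := by
  induction w generalizing n with
  | nil => simp [build] at h
  | cons b w ih =>
    have key : m ∈ (build (n + 1) w).1 ∨ m ∈ (build (n + 1) w).2 → n ≤ m :=
      fun h => le_trans (by omega) (ih h)
    rcases b with _ | _
    · rw [build_false] at h; simp only [mem_cons] at h
      rcases h with (rfl | h) | h
      · rfl
      · exact key (Or.inl h)
      · exact key (Or.inr h)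
    · rw [build_true] at h; simp only [mem_cons] at h
      rcases h with h | rfl | h
      · exact key (Or.inl h)
      · rfl
      · exact key (Or.inr h)

lemma build_length1 (n : ℕ) (w : List Bool) :
    (build n w).1.length = w.count false := by
  induction w generalizing n with
  | nil => simp [build]
  | cons b w ih =>
    rcases b with _ | _ <;> simp [build, ih, count_cons]

lemma build_length2 (n : ℕ) (w : List Bool) :
    (build n w).2.length = w.count true := by
  induction w generalizing n with
  | nil => simp [build]
  | cons b w ih =>
    rcases b with _ | _ <;> simp [build, ih, count_cons]

lemma build_chain (n : ℕ) (w : List Bool) :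
    Chain' (· < ·) (build n w).1 ∧ Chain' (· < ·) (build n w).2 := by
  induction w generalizing n with
  | nil => simp [build, List.Chain']
  | cons b w ih =>
    obtain ⟨h1, h2⟩ := ih (n + 1)
    rcases b with _ | _
    · refine ⟨List.isChain_cons.2 ⟨?_, h1⟩, h2⟩
      intro y hy
      exact lt_of_lt_of_le (by omega) (build_mem_le (Or.inl (mem_of_mem_head? hy)))
    · refine ⟨h1, List.isChain_cons.2 ⟨?_, h2⟩⟩
      intro y hy
      exact lt_of_lt_of_le (by omega) (build_mem_le (Or.inr (mem_of_mem_head? hy)))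

lemma build_perm (n : ℕ) (w : List Bool) :
    ((build n w).1 ++ (build n w).2).Perm (range' n w.length) := by
  induction w generalizing n with
  | nil => simp [build]
  | cons b w ih =>
    have := ih (n + 1)
    rcases b with _ | _
    · rw [build_false]
      simpa [range'] using this.cons n
    · rw [build_true]
      refine Perm.trans List.perm_middle ?_
      simpa [range'] using this.cons n

lemma build_mem2 {n m : ℕ} {w : List Bool} :
    m ∈ (build n w).2 ↔ ∃ j, ∃ _ : j < w.length, w[j] = true ∧ m = n + j := by
  induction w generalizing n with
  | nil => simp [build]
  | cons b w ih =>
    rcases b with _ | _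
    · rw [build_false, ih]
      constructor
      · rintro ⟨j, hj, hw, rfl⟩
        exact ⟨j + 1, by simpa using hj, by simpa using hw, by omega⟩
      · rintro ⟨j, hj, hw, rfl⟩
        match j with
        | 0 => simp at hw
        | j + 1 => exact ⟨j, by simpa using hj, by simpa using hw, by omega⟩
    · rw [build_true]
      simp only [mem_cons]
      rw [ih]
      constructor
      · rintro (rfl | ⟨j, hj, hw, rfl⟩)
        · exact ⟨0, by simp, by simp, by omega⟩
        · exact ⟨j + 1, by simpa using hj, by simpa using hw, by omega⟩
      · rintro ⟨j, hj, hw, rfl⟩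
        match j with
        | 0 => exact Or.inl (by omega)
        | j + 1 => exact Or.inr ⟨j, by simpa using hj, by simpa using hw, by omega⟩

lemma build_mem1 {n m : ℕ} {w : List Bool} :
    m ∈ (build n w).1 ↔ ∃ j, ∃ _ : j < w.length, w[j] = false ∧ m = n + j := by
  induction w generalizing n with
  | nil => simp [build]
  | cons b w ih =>
    rcases b with _ | _
    · rw [build_false]
      simp only [mem_cons]
      rw [ih]
      constructor
      · rintro (rfl | ⟨j, hj, hw, rfl⟩)
        · exact ⟨0, by simp, by simp, by omega⟩
        · exact ⟨j + 1, by simpa using hj, by simpa using hw, by omega⟩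
      · rintro ⟨j, hj, hw, rfl⟩
        match j with
        | 0 => exact Or.inl (by omega)
        | j + 1 => exact Or.inr ⟨j, by simpa using hj, by simpa using hw, by omega⟩
    · rw [build_true, ih]
      constructor
      · rintro ⟨j, hj, hw, rfl⟩
        exact ⟨j + 1, by simpa using hj, by simpa using hw, by omega⟩
      · rintro ⟨j, hj, hw, rfl⟩
        match j with
        | 0 => simp at hw
        | j + 1 => exact ⟨j, by simpa using hj, by simpa using hw, by omega⟩

lemma build_col (n : ℕ) (w : List Bool) (c : ℕ)
    (hw : ∀ i, (w.take i).count true ≤ (w.take i).count false + c) :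
    ∀ j, j < (build n w).2.length → c ≤ j →
      j - c < (build n w).1.length ∧
        (build n w).1.getD (j - c) 0 < (build n w).2.getD j 0 := by
  induction w generalizing n c with
  | nil => intro j hj; rw [build] at hj; simp at hj
  | cons b w ih =>
    rcases b with _ | _
    · -- false
      have hw' : ∀ i, (w.take i).count true ≤ (w.take i).count false + (c + 1) := by
        intro i
        have := hw (i + 1)
        simp [take_succ_cons, count_cons] at this
        omega
      intro j hj hcj
      rw [build_false] at hj ⊢
      dsimp only at hj ⊢
      rcases eq_or_lt_of_le hcj with rfl | hlt
      · refine ⟨by simp, ?_⟩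
        have e : c - c = 0 := by omega
        simp only [e, getD_cons_zero]
        have hmem : (build (n + 1) w).2.getD c 0 ∈ (build (n + 1) w).2 := by
          rw [getD_eq_getElem _ _ hj]; exact getElem_mem _
        have := build_mem_le (Or.inr hmem)
        omega
      · obtain ⟨h, hlt2⟩ := ih (n + 1) (c + 1) hw' j hj (by omega)
        refine ⟨by simp; omega, ?_⟩
        have e : j - c = (j - (c + 1)) + 1 := by omega
        simp only [e, getD_cons_succ]
        exact hlt2
    · -- true
      have hc1 : 1 ≤ c := by have := hw 1; simpa using this
      have hw' : ∀ i, (w.take i).count true ≤ (w.take i).count false + (c - 1) := by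
        intro i
        have := hw (i + 1)
        simp [take_succ_cons, count_cons] at this
        omega
      intro j hj hcj
      obtain ⟨k, rfl⟩ : ∃ k, j = k + 1 := ⟨j - 1, by omega⟩
      rw [build_true] at hj ⊢
      dsimp only at hj ⊢
      simp only [length_cons, Nat.add_lt_add_iff_right] at hj
      obtain ⟨h, hlt2⟩ := ih (n + 1) (c - 1) hw' k hj (by omega)
      refine ⟨by omega, ?_⟩
      have e1 : (k + 1) - c = k - (c - 1) := by omega
      simp only [e1, getD_cons_succ]
      exact hlt2

lemma list_toFinset_range (n : ℕ) : (List.range n).toFinset = Finset.range n := by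
  ext x; simp

lemma countP_range_mem {L : List ℕ} (hL : L.Nodup) (h1 : ∀ x ∈ L, 1 ≤ x) (m : ℕ) :
    (range m).countP (fun i => decide ((i + 1) ∈ L)) = L.countP (fun x => decide (x ≤ m)) := by
  classical
  rw [countP_eq_length_filter, countP_eq_length_filter]
  rw [← toFinset_card_of_nodup ((nodup_range (n := m)).filter _),
    ← toFinset_card_of_nodup (hL.filter _)]
  rw [toFinset_filter, toFinset_filter, list_toFinset_range]
  refine Finset.card_bij (fun i _ => i + 1) ?_ ?_ ?_
  · intro a ha
    simp only [Finset.mem_filter, Finset.mem_range, decide_eq_true_eq, mem_toFinset] at ha ⊢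
    exact ⟨ha.2, by omega⟩
  · intro a _ b _ h
    omega
  · intro b hb
    simp only [Finset.mem_filter, Finset.mem_range, decide_eq_true_eq, mem_toFinset] at hb ⊢
    have hb1 := h1 b hb.1
    exact ⟨b - 1, ⟨by omega, by rw [Nat.sub_add_cancel hb1]; exact hb.1⟩, by omega⟩

lemma sorted_countP_aux {l : List ℕ} (hs : Pairwise (· < ·) l) {j : ℕ} (hj : j < l.length)
    {m : ℕ} (hm : m < l[j]) : l.countP (fun x => decide (x ≤ m)) ≤ j := by
  have hsplit : l.countP (fun x => decide (x ≤ m)) =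
      (l.take j).countP (fun x => decide (x ≤ m)) +
        (l.drop j).countP (fun x => decide (x ≤ m)) := by
    rw [← countP_append, take_append_drop]
  have h2 : (l.drop j).countP (fun x => decide (x ≤ m)) = 0 := by
    rw [countP_eq_zero]
    intro x hx
    obtain ⟨i, hi, hxe⟩ := List.getElem_of_mem hx
    have hld : (l.drop j).length = l.length - j := length_drop
    have hji : j + i < l.length := by omega
    have e : x = l[j + i]'hji := by rw [← hxe]; exact List.getElem_drop
    have hle : l[j] ≤ l[j + i]'hji := by
      rcases Nat.eq_zero_or_pos i with rfl | hpos
      · simp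
      · exact le_of_lt (hs.rel_get_of_lt (a := ⟨j, hj⟩) (b := ⟨j + i, hji⟩) (by simp; omega))
    simp only [e, decide_eq_true_eq]
    omega
  have h3 : (l.take j).countP (fun x => decide (x ≤ m)) ≤ j := by
    calc (l.take j).countP _ ≤ (l.take j).length := countP_le_length
    _ ≤ j := by simp
  omega

lemma sorted_countP_le {r1 r2 : List ℕ} (h1 : Pairwise (· < ·) r1) (h2 : Pairwise (· < ·) r2)
    (hlen : r2.length ≤ r1.length)
    (hcol : ∀ j < r2.length, r1.getD j 0 < r2.getD j 0) (m : ℕ) :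
    r2.countP (fun x => decide (x ≤ m)) ≤ r1.countP (fun x => decide (x ≤ m)) := by
  have hk2 : r2.countP (fun x => decide (x ≤ m)) ≤ r2.length := countP_le_length
  have hmem : ∀ j (hj2 : j < r2.length), j < r2.countP (fun x => decide (x ≤ m)) →
      r2[j] ≤ m := by
    intro j hj2 hj
    by_contra hc
    push_neg at hc
    exact absurd (sorted_countP_aux h2 hj2 hc) (by omega)
  have hall : ∀ x ∈ r1.take (r2.countP (fun x => decide (x ≤ m))), x ≤ m := by
    intro x hx
    obtain ⟨i, hi, hxe⟩ := List.getElem_of_mem hx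
    have hik : i < r2.countP (fun x => decide (x ≤ m)) := by
      have : (r1.take (r2.countP (fun x => decide (x ≤ m)))).length = _ := length_take
      omega
    have hir1 : i < r1.length := by omega
    have e : x = r1[i]'hir1 := by rw [← hxe]; exact List.getElem_take
    have hc := hcol i (by omega)
    rw [getD_eq_getElem _ _ hir1, getD_eq_getElem _ _ (by omega : i < r2.length)] at hc
    have := hmem i (by omega) hik
    omega
  calc r2.countP (fun x => decide (x ≤ m))
      = (r1.take (r2.countP (fun x => decide (x ≤ m)))).length := by
        rw [length_take]; omega
  _ = (r1.take (r2.countP (fun x => decide (x ≤ m)))).countP (fun x => decide (x ≤ m)) := by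
        refine (countP_eq_length.2 ?_).symm
        intro a ha
        simpa using hall a ha
  _ ≤ r1.countP (fun x => decide (x ≤ m)) := (take_sublist _ _).countP_le

lemma eq_of_sorted_of_mem_iff {l1 l2 : List ℕ} (h1 : Chain' (· < ·) l1)
    (h2 : Chain' (· < ·) l2) (h : ∀ x, x ∈ l1 ↔ x ∈ l2) : l1 = l2 := by
  rw [Chain', isChain_iff_pairwise] at h1 h2
  haveI : IsAntisymm ℕ (· < ·) := ⟨fun a b hab hba => by omega⟩
  exact h1.eq_of_mem_iff h2 h

end StmtAux


namespace StmtAux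

/-- The tableau associated to a word. -/
def tab (w : List Bool) : List (List ℕ) :=
  (if (build 1 w).1 = [] then [] else [(build 1 w).1]) ++
    (if (build 1 w).2 = [] then [] else [(build 1 w).2])

lemma bal_all {w : List Bool} (hw : Bal w) : w.count true ≤ w.count false := by
  have := hw w.length
  simpa using this

lemma tab_flatten (w : List Bool) :
    (tab w).flatten = (build 1 w).1 ++ (build 1 w).2 := by
  unfold tab
  split <;> split <;> simp_all

lemma tab_cases {w : List Bool} (hw : Bal w) :
    (tab w = [] ∧ (build 1 w).1 = [] ∧ (build 1 w).2 = []) ∨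
    (tab w = [(build 1 w).1] ∧ (build 1 w).1 ≠ [] ∧ (build 1 w).2 = []) ∨
    (tab w = [(build 1 w).1, (build 1 w).2] ∧ (build 1 w).1 ≠ [] ∧ (build 1 w).2 ≠ []) := by
  have hlen : (build 1 w).2.length ≤ (build 1 w).1.length := by
    rw [build_length1, build_length2]; exact bal_all hw
  by_cases h1 : (build 1 w).1 = []
  · have h2 : (build 1 w).2 = [] := by
      rw [← length_eq_zero_iff] at h1 ⊢; omega
    exact Or.inl ⟨by simp [tab, h1, h2], h1, h2⟩
  · by_cases h2 : (build 1 w).2 = []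
    · exact Or.inr (Or.inl ⟨by simp [tab, h1, h2], h1, h2⟩)
    · exact Or.inr (Or.inr ⟨by simp [tab, h1, h2], h1, h2⟩)

lemma tab_getD_one {w : List Bool} (hw : Bal w) :
    (tab w).getD 1 [] = (build 1 w).2 := by
  rcases tab_cases hw with ⟨h, _, h2⟩ | ⟨h, _, h2⟩ | ⟨h, _, _⟩ <;> rw [h]
  · simp [h2]
  · simp [h2]
  · simp

lemma tab_isSYT {w : List Bool} (hw : Bal w) : IsSYT w.length (tab w) := by
  have hchain := build_chain 1 w
  have hlen : (build 1 w).2.length ≤ (build 1 w).1.length := by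
    rw [build_length1, build_length2]; exact bal_all hw
  have hcol : ∀ j < (build 1 w).2.length,
      (build 1 w).1.getD j 0 < (build 1 w).2.getD j 0 := by
    intro j hj
    have := build_col 1 w 0 (fun i => by have := hw i; omega) j hj (by omega)
    simpa using this.2
  refine ⟨?_, ?_, ?_, ?_, ?_⟩
  · intro r hr
    rcases tab_cases hw with ⟨h, _, _⟩ | ⟨h, _, _⟩ | ⟨h, _, _⟩ <;> rw [h] at hr <;>
      simp at hr
    · subst hr; exact hchain.1
    · rcases hr with rfl | rfl
      · exact hchain.1
      · exact hchain.2
  · intro i j hi hj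
    rcases tab_cases hw with ⟨h, _, _⟩ | ⟨h, _, _⟩ | ⟨h, _, _⟩ <;> rw [h] at hi hj ⊢
    · simp at hi
    · simp at hi
    · obtain rfl : i = 0 := by simp at hi; omega
      simpa using hcol j (by simpa using hj)
  · rcases tab_cases hw with ⟨h, _, _⟩ | ⟨h, _, _⟩ | ⟨h, _, _⟩ <;> rw [h] <;> simp [Chain']
    exact hlen
  · intro r hr
    rcases tab_cases hw with ⟨h, _, _⟩ | ⟨h, h1, _⟩ | ⟨h, h1, h2⟩ <;> rw [h] at hr <;>
      simp at hr
    · subst hr; exact h1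
    · rcases hr with rfl | rfl
      · exact h1
      · exact h2
  · rw [tab_flatten]
    exact build_perm 1 w

lemma tab_length_le (w : List Bool) : (tab w).length ≤ 2 := by
  unfold tab; split <;> split <;> simp

lemma shape_tab {w : List Bool} (hw : Bal w) :
    shape (tab w) =
      (if w.count false = 0 then [] else [w.count false]) ++
        (if w.count true = 0 then [] else [w.count true]) := by
  have c1 : w.count false = (build 1 w).1.length := (build_length1 1 w).symm
  have c2 : w.count true = (build 1 w).2.length := (build_length2 1 w).symm
  by_cases h1 : (build 1 w).1 = [] <;> by_cases h2 : (build 1 w).2 = [] <;>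
    simp [tab, shape, c1, c2, h1, h2, length_eq_zero_iff]

end StmtAux

namespace StmtAux

lemma flatten_two {t : List (List ℕ)} (h : t.length ≤ 2) :
    t.flatten = t.getD 0 [] ++ t.getD 1 [] := by
  match t with
  | [] => simp
  | [a] => simp
  | [a, b] => simp
  | a :: b :: c :: r => simp at h

/-- The word associated to a tableau. -/
def wd (ℓ : ℕ) (t : List (List ℕ)) : List Bool :=
  (range ℓ).map (fun i => decide ((i + 1) ∈ t.getD 1 []))

lemma wd_length (ℓ : ℕ) (t : List (List ℕ)) : (wd ℓ t).length = ℓ := by simp [wd]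

section TabFacts

variable {ℓ : ℕ} {t : List (List ℕ)} (ht : IsSYT ℓ t) (h2 : t.length ≤ 2)

include ht h2

lemma t_perm : (t.getD 0 [] ++ t.getD 1 []).Perm (range' 1 ℓ) := by
  rw [← flatten_two h2]; exact ht.2.2.2.2

lemma t_nodup : (t.getD 0 [] ++ t.getD 1 []).Nodup :=
  (t_perm ht h2).nodup_iff.2 (nodup_range' (s := 1) (n := ℓ))

lemma t_mem_iff : ∀ x, (x ∈ t.getD 0 [] ∨ x ∈ t.getD 1 []) ↔ (1 ≤ x ∧ x < 1 + ℓ) := by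
  intro x
  rw [← mem_append, (t_perm ht h2).mem_iff, mem_range'_1]

lemma t_sorted1 : Chain' (· < ·) (t.getD 0 []) := by
  match t with
  | [] => simp [Chain']
  | a :: r => exact ht.1 a (by simp)

lemma t_sorted2 : Chain' (· < ·) (t.getD 1 []) := by
  match t with
  | [] => simp [Chain']
  | [a] => simp [Chain']
  | a :: b :: r => exact ht.1 b (by simp)

lemma t_len21 : (t.getD 1 []).length ≤ (t.getD 0 []).length := by
  match t with
  | [] => simp
  | [a] => simp
  | [a, b] =>
    have h := ht.2.2.1
    simp only [map_cons, map_nil, Chain', List.isChain_pair] at h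
    simpa using h
  | a :: b :: c :: r => simp at h2

lemma t_col : ∀ j < (t.getD 1 []).length,
    (t.getD 0 []).getD j 0 < (t.getD 1 []).getD j 0 := by
  intro j hj
  match t with
  | [] => simp at hj
  | [a] => simp at hj
  | [a, b] => exact ht.2.1 0 j (by simp) hj
  | a :: b :: c :: r => simp at h2

lemma t_dichot : ∀ x, 1 ≤ x → x < 1 + ℓ → ((x ∈ t.getD 0 []) ↔ ¬(x ∈ t.getD 1 [])) := by
  intro x hx1 hx2
  have hm := (t_mem_iff ht h2 x).2 ⟨hx1, hx2⟩
  have hd : Disjoint (t.getD 0 []) (t.getD 1 []) := disjoint_of_nodup_append (t_nodup ht h2)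
  constructor
  · intro h1 h2'
    exact hd h1 h2'
  · intro h2'
    tauto

lemma wd_count_true_take (m : ℕ) :
    ((wd ℓ t).take m).count true =
      (t.getD 1 []).countP (fun x => decide (x ≤ min m ℓ)) := by
  rw [wd, ← map_take, take_range, count, countP_map]
  have e : (range (min m ℓ)).countP ((fun b => b == true) ∘ fun i => decide ((i + 1) ∈ t.getD 1 []))
      = (range (min m ℓ)).countP (fun i => decide ((i + 1) ∈ t.getD 1 [])) := by
    apply countP_congr; intro x _; simp
  rw [e, countP_range_mem (nodup_append.1 (t_nodup ht h2)).2.1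
    (fun x hx => ((t_mem_iff ht h2 x).1 (Or.inr hx)).1)]

lemma wd_count_false_take (m : ℕ) :
    ((wd ℓ t).take m).count false =
      (t.getD 0 []).countP (fun x => decide (x ≤ min m ℓ)) := by
  rw [wd, ← map_take, take_range, count, countP_map]
  have e : (range (min m ℓ)).countP ((fun b => b == false) ∘ fun i => decide ((i + 1) ∈ t.getD 1 []))
      = (range (min m ℓ)).countP (fun i => decide ((i + 1) ∈ t.getD 0 [])) := by
    apply countP_congr
    intro x hx
    have hxl : x < ℓ := by have := mem_range.1 hx; omega
    have hd := t_dichot ht h2 (x + 1) (by omega) (by omega)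
    constructor
    · intro hcond
      have h1 : ¬((x + 1) ∈ t.getD 1 []) := by
        intro hc
        simp at hcond
        rw [List.getD_eq_getElem?_getD] at hc
        exact hcond hc
      exact decide_eq_true (hd.2 h1)
    · intro hcond
      have h1 : (x + 1) ∈ t.getD 0 [] := of_decide_eq_true hcond
      have h2' : ¬((x + 1) ∈ t.getD 1 []) := hd.1 h1
      simp
      rw [← List.getD_eq_getElem?_getD]
      exact h2' 
  rw [e, countP_range_mem (nodup_append.1 (t_nodup ht h2)).1
    (fun x hx => ((t_mem_iff ht h2 x).1 (Or.inl hx)).1)]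

lemma wd_bal : Bal (wd ℓ t) := by
  intro i
  rw [wd_count_true_take ht h2, wd_count_false_take ht h2]
  exact sorted_countP_le (isChain_iff_pairwise.1 (t_sorted1 ht h2))
    (isChain_iff_pairwise.1 (t_sorted2 ht h2)) (t_len21 ht h2) (t_col ht h2) _

lemma wd_count_true : (wd ℓ t).count true = (t.getD 1 []).length := by
  have := wd_count_true_take ht h2 ((wd ℓ t).length)
  rw [take_length] at this
  rw [this, wd_length]
  simp only [min_self]
  apply countP_eq_length.2
  intro a ha
  have := ((t_mem_iff ht h2 a).1 (Or.inr ha)).2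
  simp; omega

lemma build_wd_2 : (build 1 (wd ℓ t)).2 = t.getD 1 [] := by
  apply eq_of_sorted_of_mem_iff (build_chain 1 (wd ℓ t)).2 (t_sorted2 ht h2)
  intro x
  rw [build_mem2]
  constructor
  · rintro ⟨j, hj, hw, rfl⟩
    rw [wd_length] at hj
    have : (wd ℓ t)[j]'(by rw [wd_length]; exact hj) = decide ((j + 1) ∈ t.getD 1 []) := by
      simp [wd]
    rw [this] at hw
    simpa [Nat.add_comm] using of_decide_eq_true hw
  · intro hx
    have hb := (t_mem_iff ht h2 x).1 (Or.inr hx)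
    refine ⟨x - 1, by rw [wd_length]; omega, ?_, by omega⟩
    have : (wd ℓ t)[x-1]'(by rw [wd_length]; omega) = decide ((x - 1 + 1) ∈ t.getD 1 []) := by
      simp [wd]
    rw [this]
    simp only [decide_eq_true_eq]
    have : x - 1 + 1 = x := by omega
    rw [this]; exact hx

lemma build_wd_1 : (build 1 (wd ℓ t)).1 = t.getD 0 [] := by
  apply eq_of_sorted_of_mem_iff (build_chain 1 (wd ℓ t)).1 (t_sorted1 ht h2)
  intro x
  rw [build_mem1]
  constructor
  · rintro ⟨j, hj, hw, rfl⟩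
    rw [wd_length] at hj
    have : (wd ℓ t)[j]'(by rw [wd_length]; exact hj) = decide ((j + 1) ∈ t.getD 1 []) := by
      simp [wd]
    rw [this] at hw
    have hnm : ¬((j + 1) ∈ t.getD 1 []) := by
      simpa using hw
    have := (t_dichot ht h2 (j + 1) (by omega) (by omega)).2 hnm
    simpa [Nat.add_comm] using this
  · intro hx
    have hb := (t_mem_iff ht h2 x).1 (Or.inl hx)
    have hnot : ¬(x ∈ t.getD 1 []) := by
      intro hc
      exact absurd hc ((t_dichot ht h2 x hb.1 hb.2).1 hx)
    refine ⟨x - 1, by rw [wd_length]; omega, ?_, by omega⟩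
    have : (wd ℓ t)[x-1]'(by rw [wd_length]; omega) = decide ((x - 1 + 1) ∈ t.getD 1 []) := by
      simp [wd]
    rw [this]
    simp only [decide_eq_false_iff_not]
    have hx1 : x - 1 + 1 = x := by omega
    rw [hx1]; exact hnot

lemma tab_wd : tab (wd ℓ t) = t := by
  unfold tab
  rw [build_wd_1 ht h2, build_wd_2 ht h2]
  have hne := ht.2.2.2.1
  match t with
  | [] => simp
  | [a] =>
    have ha : a ≠ [] := hne a (by simp)
    simp [ha]
  | [a, b] =>
    have ha : a ≠ [] := hne a (by simp)
    have hb : b ≠ [] := hne b (by simp)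
    simp [ha, hb]
  | a :: b :: c :: r => simp at h2

end TabFacts

end StmtAux

namespace StmtAux

open DyckStep

lemma bool_count_length (w : List Bool) : w.count true + w.count false = w.length := by
  induction w with
  | nil => simp
  | cons b w ih => cases b <;> simp [count_cons] <;> omega

lemma step_count_length (l : List DyckStep) : l.count U + l.count D = l.length := by
  induction l with
  | nil => simp
  | cons s l ih => cases s <;> simp [count_cons] <;> omega

/-- Pairs of words. -/
def WType (ℓ : ℕ) :=
  {ww : List Bool × List Bool // ww.1.length = ℓ ∧ ww.2.length = ℓ ∧ Bal ww.1 ∧ Bal ww.2 ∧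
    ww.1.count true = ww.2.count true}

lemma tab_inj {w w' : List Bool} (hw : Bal w) (hw' : Bal w') (hl : w.length = w'.length)
    (h : tab w = tab w') : w = w' := by
  have h2 : (build 1 w).2 = (build 1 w').2 := by
    rw [← tab_getD_one hw, ← tab_getD_one hw', h]
  have e : ∀ (v : List Bool) (j : ℕ) (hj : j < v.length),
      v[j] = true ↔ (j + 1) ∈ (build 1 v).2 := by
    intro v j hj
    rw [build_mem2]
    constructor
    · intro hv; exact ⟨j, hj, hv, by omega⟩
    · rintro ⟨k, hk, hvk, he⟩
      obtain rfl : k = j := by omega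
      exact hvk
  apply List.ext_getElem hl
  intro i hi hi'
  have hiff : w[i] = true ↔ w'[i] = true := by
    rw [e w i hi, e w' i hi', h2]
  cases hw1 : w[i] <;> cases hw2 : w'[i] <;> simp_all

def toPair {ℓ : ℕ} (x : WType ℓ) :
    {pq : List (List ℕ) × List (List ℕ) //
      IsSYT ℓ pq.1 ∧ IsSYT ℓ pq.2 ∧ shape pq.1 = shape pq.2 ∧ pq.1.length ≤ 2} := by
  obtain ⟨⟨w1, w2⟩, hl1, hl2, hb1, hb2, hc⟩ := x
  dsimp only at hl1 hl2 hb1 hb2 hc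
  refine ⟨(tab w1, tab w2), ?_, ?_, ?_, tab_length_le w1⟩
  · have := tab_isSYT hb1; rwa [hl1] at this
  · have := tab_isSYT hb2; rwa [hl2] at this
  · have hcf : w1.count false = w2.count false := by
      have e1 := bool_count_length w1
      have e2 := bool_count_length w2
      omega
    rw [shape_tab hb1, shape_tab hb2, hc, hcf]

lemma getD1_len (t : List (List ℕ)) : (t.getD 1 []).length = (shape t).getD 1 0 := by
  match t with
  | [] => rfl
  | [a] => rfl
  | a :: b :: r => rfl

lemma toPair_bijective (ℓ : ℕ) : Function.Bijective (toPair (ℓ := ℓ)) := by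
  constructor
  · rintro ⟨⟨w1, w2⟩, hl1, hl2, hb1, hb2, hc⟩ ⟨⟨w1', w2'⟩, hl1', hl2', hb1', hb2', hc'⟩ h
    dsimp only at hl1 hl2 hb1 hb2 hc hl1' hl2' hb1' hb2' hc'
    simp only [toPair, Subtype.mk.injEq, Prod.mk.injEq] at h
    have e1 := tab_inj hb1 hb1' (by omega) h.1
    have e2 := tab_inj hb2 hb2' (by omega) h.2
    cases e1; cases e2; rfl
  · rintro ⟨⟨t1, t2⟩, h1, h2, hsh, hlen⟩
    dsimp only at h1 h2 hsh hlen
    have hlent : t1.length = t2.length := by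
      have : (shape t1).length = (shape t2).length := by rw [hsh]
      simpa [shape] using this
    have hlen2 : t2.length ≤ 2 := by omega
    refine ⟨⟨(wd ℓ t1, wd ℓ t2), wd_length ℓ t1, wd_length ℓ t2,
      wd_bal h1 hlen, wd_bal h2 hlen2, ?_⟩, ?_⟩
    · rw [wd_count_true h1 hlen, wd_count_true h2 hlen2, getD1_len, getD1_len, hsh]
    · simp only [toPair, Subtype.mk.injEq, Prod.mk.injEq]
      exact ⟨tab_wd h1 hlen, tab_wd h2 hlen2⟩

/-! ### Words to Dyck words -/

def stepOf (b : Bool) : DyckStep := if b then D else U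
def flipOf (b : Bool) : DyckStep := if b then U else D
def boolOfS (s : DyckStep) : Bool := match s with | U => false | D => true
def boolOfF (s : DyckStep) : Bool := match s with | U => true | D => false

lemma count_stepOf_U (w : List Bool) : (w.map stepOf).count U = w.count false := by
  rw [count, count, countP_map]
  apply countP_congr
  intro b _
  cases b <;> simp [stepOf]

lemma count_stepOf_D (w : List Bool) : (w.map stepOf).count D = w.count true := by
  rw [count, count, countP_map]
  apply countP_congr
  intro b _
  cases b <;> simp [stepOf]

lemma count_flipOf_U (w : List Bool) : (w.map flipOf).count U = w.count true := by
  rw [count, count, countP_map]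
  apply countP_congr
  intro b _
  cases b <;> simp [flipOf]

lemma count_flipOf_D (w : List Bool) : (w.map flipOf).count D = w.count false := by
  rw [count, count, countP_map]
  apply countP_congr
  intro b _
  cases b <;> simp [flipOf]

lemma count_boolOfS_true (l : List DyckStep) : (l.map boolOfS).count true = l.count D := by
  rw [count, count, countP_map]
  apply countP_congr
  intro s _
  cases s <;> simp [boolOfS]

lemma count_boolOfS_false (l : List DyckStep) : (l.map boolOfS).count false = l.count U := by
  rw [count, count, countP_map]
  apply countP_congr
  intro s _
  cases s <;> simp [boolOfS]

lemma count_boolOfF_true (l : List DyckStep) : (l.map boolOfF).count true = l.count U := by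
  rw [count, count, countP_map]
  apply countP_congr
  intro s _
  cases s <;> simp [boolOfF]

lemma count_boolOfF_false (l : List DyckStep) : (l.map boolOfF).count false = l.count D := by
  rw [count, count, countP_map]
  apply countP_congr
  intro s _
  cases s <;> simp [boolOfF]

def dlist (w1 w2 : List Bool) : List DyckStep :=
  w2.map stepOf ++ (w1.map flipOf).reverse

lemma count_take_add {α : Type*} [BEq α] (w : List α) (j : ℕ) (b : α) :
    (w.take j).count b + (w.drop j).count b = w.count b := by
  rw [← count_append, take_append_drop]

lemma count_take_le {α : Type*} [BEq α] (w : List α) (j : ℕ) (b : α) :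
    (w.take j).count b ≤ w.count b := by
  have := count_take_add w j b
  omega

lemma dlist_take_counts (w1 w2 : List Bool) (i : ℕ) :
    ((dlist w1 w2).take i).count D =
      (w2.take i).count true +
        ((w1.drop (w1.length - (i - w2.length))).count false) ∧
    ((dlist w1 w2).take i).count U =
      (w2.take i).count false +
        ((w1.drop (w1.length - (i - w2.length))).count true) := by
  unfold dlist
  rw [take_append, count_append, count_append, length_map]
  rw [take_reverse, length_map, count_reverse, count_reverse]
  rw [← map_take, ← map_drop]
  rw [count_stepOf_D, count_stepOf_U, count_flipOf_D, count_flipOf_U]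
  exact ⟨rfl, rfl⟩

lemma dlist_prefix {w1 w2 : List Bool} (hl : w1.length = w2.length)
    (hc : w1.count true = w2.count true) (hb1 : Bal w1) (hb2 : Bal w2) (i : ℕ) :
    ((dlist w1 w2).take i).count D ≤ ((dlist w1 w2).take i).count U := by
  obtain ⟨eD, eU⟩ := dlist_take_counts w1 w2 i
  rw [eD, eU]
  set j := w1.length - (i - w2.length) with hj
  have s1t := count_take_add w1 j true
  have s1f := count_take_add w1 j false
  have b1 := hb1 j
  have b2 := hb2 i
  have lt1 := bool_count_length w1
  have lt2 := bool_count_length w2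
  have lt2i := bool_count_length (w2.take i)
  have lt1j := bool_count_length (w1.take j)
  have hlen2i : (w2.take i).length = min i w2.length := length_take
  have hlen1j : (w1.take j).length = min j w1.length := length_take
  have m2t := count_take_le w2 i true
  have m2f := count_take_le w2 i false
  omega

lemma dlist_total {w1 w2 : List Bool} (hl : w1.length = w2.length)
    (hc : w1.count true = w2.count true) :
    (dlist w1 w2).count U = (dlist w1 w2).count D := by
  unfold dlist
  rw [count_append, count_append, count_reverse, count_reverse,
    count_stepOf_D, count_stepOf_U, count_flipOf_D, count_flipOf_U]
  have lt1 := bool_count_length w1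
  have lt2 := bool_count_length w2
  omega

def dword {ℓ : ℕ} (x : WType ℓ) : {p : DyckWord // p.semilength = ℓ} := by
  obtain ⟨⟨w1, w2⟩, hl1, hl2, hb1, hb2, hc⟩ := x
  dsimp only at hl1 hl2 hb1 hb2 hc
  refine ⟨⟨dlist w1 w2, dlist_total (by omega) hc, dlist_prefix (by omega) hc hb1 hb2⟩, ?_⟩
  show (dlist w1 w2).count U = ℓ
  unfold dlist
  rw [count_append, count_reverse, count_stepOf_U, count_flipOf_U]
  have lt1 := bool_count_length w1
  have lt2 := bool_count_length w2
  omega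

lemma dword_bijective (ℓ : ℕ) : Function.Bijective (dword (ℓ := ℓ)) := by
  constructor
  · rintro ⟨⟨w1, w2⟩, hl1, hl2, hb1, hb2, hc⟩ ⟨⟨w1', w2'⟩, hl1', hl2', hb1', hb2', hc'⟩ h
    dsimp only at hl1 hl2 hb1 hb2 hc hl1' hl2' hb1' hb2' hc'
    simp only [dword, Subtype.mk.injEq, DyckWord.mk.injEq] at h
    have hlm : (w2.map stepOf).length = (w2'.map stepOf).length := by
      simp [hl2, hl2']
    have h2 : w2.map stepOf = w2'.map stepOf := by
      have := congrArg (fun l => l.take (w2.map stepOf).length) h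
      simpa [dlist, take_left, hlm, List.take_left'] using this
    have h1 : (w1.map flipOf).reverse = (w1'.map flipOf).reverse := by
      have := congrArg (fun l => l.drop (w2.map stepOf).length) h
      simpa [dlist, drop_left, hlm, List.drop_left'] using this
    have hs : Function.Injective stepOf := by
      intro a b hab
      cases a <;> cases b <;> simp [stepOf] at hab ⊢
    have hf : Function.Injective flipOf := by
      intro a b hab
      cases a <;> cases b <;> simp [flipOf] at hab ⊢
    have e2 : w2 = w2' := map_injective_iff.2 hs h2
    have e1 : w1 = w1' := map_injective_iff.2 hf (reverse_injective h1)
    subst e1 e2; rfl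
  · rintro ⟨p, hp⟩
    obtain ⟨l, htot, hpre⟩ := p
    have hcu : l.count U = ℓ := hp
    have hlen : l.length = 2 * ℓ := by
      have := step_count_length l
      omega
    have hdropU : ∀ m, (l.drop m).count U ≤ (l.drop m).count D := by
      intro m
      have h1 := count_take_add l m U
      have h2 := count_take_add l m D
      have h3 := hpre m
      omega
    have hid1 : ∀ s, stepOf (boolOfS s) = s := by intro s; cases s <;> rfl
    have hid2 : ∀ s, flipOf (boolOfF s) = s := by intro s; cases s <;> rfl
    set w2 := (l.take ℓ).map boolOfS with hw2
    set w1 := ((l.drop ℓ).reverse).map boolOfF with hw1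
    have lw2 : w2.length = ℓ := by
      rw [hw2, length_map, length_take]
      omega
    have lw1 : w1.length = ℓ := by
      rw [hw1, length_map, length_reverse, length_drop]
      omega
    have hbal2 : Bal w2 := by
      intro i
      rw [hw2, ← map_take, take_take, count_boolOfS_true, count_boolOfS_false]
      exact hpre _
    have hbal1 : Bal w1 := by
      intro i
      rw [hw1, ← map_take, take_reverse, count_boolOfF_true, count_boolOfF_false,
        count_reverse, count_reverse, drop_drop]
      exact hdropU _
    have hcnt : w1.count true = w2.count true := by
      rw [hw1, hw2, count_boolOfF_true, count_boolOfS_true, count_reverse]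
      have h1 := count_take_add l ℓ U
      have h2 := count_take_add l ℓ D
      have h3 := step_count_length (l.take ℓ)
      have h4 : (l.take ℓ).length = min ℓ l.length := length_take
      omega
    refine ⟨⟨(w1, w2), lw1, lw2, hbal1, hbal2, hcnt⟩, ?_⟩
    simp only [dword, Subtype.mk.injEq, DyckWord.mk.injEq]
    show dlist w1 w2 = l
    unfold dlist
    rw [hw1, hw2, map_map, map_map]
    rw [show stepOf ∘ boolOfS = id from funext hid1, map_id]
    rw [show flipOf ∘ boolOfF = id from funext hid2, map_id]
    rw [reverse_reverse, take_append_drop]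

end StmtAux


/-- The number of pairs `(P,Q)` of standard Young tableaux of the same shape `λ ⊢ ℓ` with
at most two rows equals the Catalan number `C_ℓ`. -/
theorem stmt_11 (ℓ : ℕ) :
    Nat.card {pq : List (List ℕ) × List (List ℕ) //
      IsSYT ℓ pq.1 ∧ IsSYT ℓ pq.2 ∧ shape pq.1 = shape pq.2 ∧ pq.1.length ≤ 2}
      = catalan ℓ := by
  have e1 : Nat.card (StmtAux.WType ℓ) =
      Nat.card {pq : List (List ℕ) × List (List ℕ) //
        IsSYT ℓ pq.1 ∧ IsSYT ℓ pq.2 ∧ shape pq.1 = shape pq.2 ∧ pq.1.length ≤ 2} :=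
    Nat.card_eq_of_bijective _ (StmtAux.toPair_bijective ℓ)
  have e2 : Nat.card (StmtAux.WType ℓ) =
      Nat.card {p : DyckWord // p.semilength = ℓ} :=
    Nat.card_eq_of_bijective _ (StmtAux.dword_bijective ℓ)
  rw [← e1, e2, Nat.card_eq_fintype_card, DyckWord.card_dyckWord_semilength_eq_catalan]
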